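/- Let (X,Y) be uniformly distributed on the unit circle {(x,y) ∈ ℝ² : x²+y²=1}. Then 30·∫(F(x,y) − F₁(x)F₂(y))² dF(x,y) = 1/16, where F is the joint CDF of (X,Y) and F₁, F₂ are the marginal CDFs; i.e., Hoeffding's D correlation measure of (X,Y) equals 1/16. -/

import Mathlib

open MeasureTheory Real Set

private lemma pi2_pos : (0:ℝ) < 2 * π := by positivity

private lemma sin_le_sin_mono {a b : ℝ} (ha : -(π/2) ≤ a) (hb : b ≤ π/2) (hab : a ≤ b) :
    Real.sin a ≤ Real.sin b :=
  Real.strictMonoOn_sin.monotoneOn ⟨ha, hab.trans hb⟩ ⟨ha.trans hab, hb⟩ hab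

private lemma sin_lt_sin_mono {a b : ℝ} (ha : -(π/2) ≤ a) (hb : b ≤ π/2) (hab : a < b) :
    Real.sin a < Real.sin b :=
  Real.strictMonoOn_sin ⟨ha, hab.le.trans hb⟩ ⟨ha.trans hab.le, hb⟩ hab

private lemma sin_le_sin_anti {a b : ℝ} (ha : π/2 ≤ a) (hb : b ≤ π + π/2) (hab : a ≤ b) :
    Real.sin b ≤ Real.sin a := by
  have h1 : Real.sin b = Real.sin (π - b) := (Real.sin_pi_sub b).symm
  have h2 : Real.sin a = Real.sin (π - a) := (Real.sin_pi_sub a).symm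
  rw [h1, h2]
  apply sin_le_sin_mono <;> linarith

private lemma sin_lt_sin_anti {a b : ℝ} (ha : π/2 ≤ a) (hb : b ≤ π + π/2) (hab : a < b) :
    Real.sin b < Real.sin a := by
  rw [← Real.sin_pi_sub b, ← Real.sin_pi_sub a]
  apply sin_lt_sin_mono <;> linarith

/-- cos characterization for t ∈ [0, π] -/
private lemma cos_iff₁ {t φ : ℝ} (ht0 : 0 ≤ t) (htπ : t ≤ π) (hφ0 : 0 ≤ φ) (hφ2 : φ < 2*π) :
    Real.cos φ ≤ Real.cos t ↔ t ≤ φ ∧ φ ≤ 2*π - t := by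
  have hπ := Real.pi_pos
  constructor
  · intro h
    constructor
    · by_contra hc
      push_neg at hc
      have : Real.cos t < Real.cos φ := Real.strictAntiOn_cos ⟨hφ0, by linarith⟩ ⟨ht0, htπ⟩ hc
      linarith
    · by_contra hc
      push_neg at hc
      have he : Real.cos (2*π - φ) = Real.cos φ := by
        rw [Real.cos_sub, Real.cos_two_pi, Real.sin_two_pi]; ring
      have : Real.cos t < Real.cos (2*π - φ) :=
        Real.strictAntiOn_cos ⟨by linarith, by linarith⟩ ⟨ht0, htπ⟩ (by linarith)
      linarith
  · rintro ⟨h1, h2⟩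
    rcases le_or_gt φ π with hc | hc
    · exact Real.cos_le_cos_of_nonneg_of_le_pi ht0 hc h1
    · have he : Real.cos (2*π - φ) = Real.cos φ := by
        rw [Real.cos_sub, Real.cos_two_pi, Real.sin_two_pi]; ring
      rw [← he]
      exact Real.cos_le_cos_of_nonneg_of_le_pi ht0 (by linarith) (by linarith)

/-- cos characterization for t ∈ [π, 2π] -/
private lemma cos_iff₂ {t φ : ℝ} (ht0 : π ≤ t) (htπ : t ≤ 2*π) (hφ0 : 0 ≤ φ) (hφ2 : φ < 2*π) :
    Real.cos φ ≤ Real.cos t ↔ 2*π - t ≤ φ ∧ φ ≤ t := by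
  have he : Real.cos t = Real.cos (2*π - t) := by
    rw [Real.cos_sub, Real.cos_two_pi, Real.sin_two_pi]; ring
  rw [he, cos_iff₁ (by linarith) (by linarith) hφ0 hφ2]
  constructor <;> rintro ⟨h1, h2⟩ <;> constructor <;> linarith

/-- sin characterization for t ∈ [0, π/2] -/
private lemma sin_iff₁ {t φ : ℝ} (ht0 : 0 ≤ t) (htπ : t ≤ π/2) (hφ0 : 0 ≤ φ) (hφ2 : φ < 2*π) :
    Real.sin φ ≤ Real.sin t ↔ φ ≤ t ∨ π - t ≤ φ := by
  have hπ := Real.pi_pos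
  constructor
  · intro h
    by_contra hc
    push_neg at hc
    obtain ⟨h1, h2⟩ := hc
    rcases le_or_gt φ (π/2) with hm | hm
    · have := sin_lt_sin_mono (by linarith) hm h1
      linarith
    · have he : Real.sin φ = Real.sin (π - φ) := (Real.sin_pi_sub φ).symm
      have : Real.sin t < Real.sin (π - φ) := sin_lt_sin_mono (by linarith) (by linarith) (by linarith)
      linarith
  · rintro (h | h)
    · exact sin_le_sin_mono (by linarith) htπ h
    · rcases le_or_gt φ (π + π/2) with hm | hm
      · have := sin_le_sin_anti (a := π - t) (by linarith) hm h
        rwa [Real.sin_pi_sub] at this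
      · have h1 : Real.sin φ ≤ 0 := by
          have : Real.sin (φ - π) = -Real.sin φ := Real.sin_sub_pi φ
          nlinarith [Real.sin_nonneg_of_nonneg_of_le_pi (x := φ - π) (by linarith) (by linarith)]
        have h2 : 0 ≤ Real.sin t := Real.sin_nonneg_of_nonneg_of_le_pi ht0 (by linarith)
        linarith

/-- sin characterization for t ∈ [π/2, π] -/
private lemma sin_iff₂ {t φ : ℝ} (ht0 : π/2 ≤ t) (htπ : t ≤ π) (hφ0 : 0 ≤ φ) (hφ2 : φ < 2*π) :
    Real.sin φ ≤ Real.sin t ↔ φ ≤ π - t ∨ t ≤ φ := by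
  rw [← Real.sin_pi_sub t, sin_iff₁ (by linarith) (by linarith) hφ0 hφ2]
  constructor <;> rintro (h | h) <;> [left; right; left; right] <;> linarith
private lemma sin_nonpos_34 {t : ℝ} (h0 : π ≤ t) (h1 : t ≤ 2*π) : Real.sin t ≤ 0 := by
  nlinarith [Real.sin_nonneg_of_nonneg_of_le_pi (x := t - π) (by linarith) (by linarith),
    Real.sin_sub_pi t]

private lemma sin_3pi_sub (t : ℝ) : Real.sin (3*π - t) = Real.sin t := by
  rw [show 3*π - t = (π - t) + 2*π by ring, Real.sin_add_two_pi, Real.sin_pi_sub]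

/-- sin subset lemma for t ∈ [π, 3π/2] -/
private lemma sin_sub₃ {t φ : ℝ} (ht0 : π ≤ t) (ht1 : t ≤ π + π/2) (hφ0 : 0 ≤ φ)
    (hφ2 : φ < 2*π) (h : Real.sin φ ≤ Real.sin t) : φ = 0 ∨ (t ≤ φ ∧ φ ≤ 3*π - t) := by
  have hπ := Real.pi_pos
  by_contra hc
  push_neg at hc
  obtain ⟨hne, hor⟩ := hc
  have hor' : φ < t ∨ 3*π - t < φ := by
    rcases lt_or_ge φ t with h1 | h1
    · exact Or.inl h1
    · exact Or.inr (hor h1)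
  rcases hor' with h1 | h1
  · rcases le_or_gt (π/2) φ with hm | hm
    · have := sin_lt_sin_anti hm (by linarith) h1
      linarith
    · have hp : 0 < Real.sin φ := Real.sin_pos_of_pos_of_lt_pi (lt_of_le_of_ne hφ0 (Ne.symm hne)) (by linarith)
      have hn : Real.sin t ≤ 0 := sin_nonpos_34 ht0 (by linarith)
      linarith
  · have he : Real.sin (φ - 2*π) = Real.sin φ := Real.sin_sub_two_pi φ
    have he2 : Real.sin (π - t) = Real.sin t := Real.sin_pi_sub t
    have := sin_lt_sin_mono (a := π - t) (b := φ - 2*π) (by linarith) (by linarith) (by linarith)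
    linarith

private lemma sin_mem₃ {t φ : ℝ} (ht0 : π ≤ t) (ht1 : t ≤ π + π/2) (h1 : t ≤ φ)
    (h2 : φ ≤ 3*π - t) : Real.sin φ ≤ Real.sin t := by
  have hπ := Real.pi_pos
  rcases le_or_gt φ (π + π/2) with hm | hm
  · exact sin_le_sin_anti (by linarith) hm h1
  · have he : Real.sin (φ - 2*π) = Real.sin φ := Real.sin_sub_two_pi φ
    have he2 : Real.sin (π - t) = Real.sin t := Real.sin_pi_sub t
    have := sin_le_sin_mono (a := φ - 2*π) (b := π - t) (by linarith) (by linarith) (by linarith)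
    linarith

/-- sin subset lemma for t ∈ [3π/2, 2π] -/
private lemma sin_sub₄ {t φ : ℝ} (ht0 : π + π/2 ≤ t) (ht1 : t ≤ 2*π) (hφ0 : 0 ≤ φ)
    (hφ2 : φ < 2*π) (h : Real.sin φ ≤ Real.sin t) : φ = 0 ∨ (3*π - t ≤ φ ∧ φ ≤ t) := by
  have hπ := Real.pi_pos
  by_contra hc
  push_neg at hc
  obtain ⟨hne, hor⟩ := hc
  have hor' : φ < 3*π - t ∨ t < φ := by
    rcases lt_or_ge φ (3*π - t) with h1 | h1
    · exact Or.inl h1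
    · exact Or.inr (hor h1)
  rcases hor' with h1 | h1
  · rcases le_or_gt (π/2) φ with hm | hm
    · have := sin_lt_sin_anti hm (by linarith) h1
      rw [sin_3pi_sub] at this
      linarith
    · have hp : 0 < Real.sin φ := Real.sin_pos_of_pos_of_lt_pi (lt_of_le_of_ne hφ0 (Ne.symm hne)) (by linarith)
      have hn : Real.sin t ≤ 0 := sin_nonpos_34 (by linarith) ht1
      linarith
  · have he : Real.sin (φ - 2*π) = Real.sin φ := Real.sin_sub_two_pi φ
    have he2 : Real.sin (t - 2*π) = Real.sin t := Real.sin_sub_two_pi t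
    have := sin_lt_sin_mono (a := t - 2*π) (b := φ - 2*π) (by linarith) (by linarith) (by linarith)
    linarith

private lemma sin_mem₄ {t φ : ℝ} (ht0 : π + π/2 ≤ t) (ht1 : t ≤ 2*π) (h1 : 3*π - t ≤ φ)
    (h2 : φ ≤ t) : Real.sin φ ≤ Real.sin t := by
  have hπ := Real.pi_pos
  rcases le_or_gt φ (π + π/2) with hm | hm
  · have := sin_le_sin_anti (a := 3*π - t) (by linarith) hm (by linarith)
    rw [sin_3pi_sub] at this
    linarith
  · have he : Real.sin (φ - 2*π) = Real.sin φ := Real.sin_sub_two_pi φ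
    have he2 : Real.sin (t - 2*π) = Real.sin t := Real.sin_sub_two_pi t
    have := sin_le_sin_mono (a := φ - 2*π) (b := t - 2*π) (by linarith) (by linarith) (by linarith)
    linarith

/-- squeeze lemma for volumes -/
private lemma volume_between {S : Set ℝ} {a b c : ℝ} (h₁ : Set.Ioo a b ⊆ S)
    (h₂ : S ⊆ insert c (Set.Icc a b)) : volume S = ENNReal.ofReal (b - a) := by
  refine le_antisymm ?_ ?_
  · calc volume S ≤ volume (insert c (Set.Icc a b)) := measure_mono h₂
    _ ≤ volume {c} + volume (Set.Icc a b) := by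
        rw [Set.insert_eq]; exact measure_union_le _ _
    _ = ENNReal.ofReal (b - a) := by simp [Real.volume_Icc]
  · rw [← Real.volume_Ioo]; exact measure_mono h₁
private lemma vol_cos₁ {t : ℝ} (h0 : 0 ≤ t) (h1 : t ≤ π) :
    volume {φ ∈ Set.Ico 0 (2*π) | Real.cos φ ≤ Real.cos t} = ENNReal.ofReal (2*π - 2*t) := by
  have hπ := Real.pi_pos
  rw [show (2*π - 2*t : ℝ) = (2*π - t) - t by ring]
  apply volume_between (c := t)
  · rintro φ ⟨hl, hr⟩
    exact ⟨⟨by linarith, by linarith⟩, (cos_iff₁ h0 h1 (by linarith) (by linarith)).2 ⟨hl.le, hr.le⟩⟩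
  · rintro φ ⟨⟨ha, hb⟩, hc⟩
    obtain ⟨h2, h3⟩ := (cos_iff₁ h0 h1 ha hb).1 hc
    exact Set.mem_insert_of_mem _ ⟨h2, h3⟩

private lemma vol_cos₂ {t : ℝ} (h0 : π ≤ t) (h1 : t ≤ 2*π) :
    volume {φ ∈ Set.Ico 0 (2*π) | Real.cos φ ≤ Real.cos t} = ENNReal.ofReal (2*t - 2*π) := by
  have hπ := Real.pi_pos
  rw [show (2*t - 2*π : ℝ) = t - (2*π - t) by ring]
  apply volume_between (c := 0)
  · rintro φ ⟨hl, hr⟩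
    exact ⟨⟨by linarith, by linarith⟩, (cos_iff₂ h0 h1 (by linarith) (by linarith)).2 ⟨hl.le, hr.le⟩⟩
  · rintro φ ⟨⟨ha, hb⟩, hc⟩
    obtain ⟨h2, h3⟩ := (cos_iff₂ h0 h1 ha hb).1 hc
    exact Set.mem_insert_of_mem _ ⟨h2, h3⟩

private lemma vol_sin₁ {t : ℝ} (h0 : 0 ≤ t) (h1 : t ≤ π/2) :
    volume {φ ∈ Set.Ico 0 (2*π) | Real.sin φ ≤ Real.sin t} = ENNReal.ofReal (π + 2*t) := by
  have hπ := Real.pi_pos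
  have hset : {φ ∈ Set.Ico 0 (2*π) | Real.sin φ ≤ Real.sin t}
      = Set.Ico 0 (2*π) \ Set.Ioo t (π - t) := by
    ext φ
    simp only [Set.mem_sep_iff, Set.mem_Ico, Set.mem_diff, Set.mem_Ioo]
    constructor
    · rintro ⟨⟨ha, hb⟩, hc⟩
      refine ⟨⟨ha, hb⟩, ?_⟩
      rcases (sin_iff₁ h0 h1 ha hb).1 hc with h | h
      · rintro ⟨h4, h5⟩; linarith
      · rintro ⟨h4, h5⟩; linarith
    · rintro ⟨⟨ha, hb⟩, hc⟩
      refine ⟨⟨ha, hb⟩, (sin_iff₁ h0 h1 ha hb).2 ?_⟩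
      rcases le_or_gt φ t with h | h
      · exact Or.inl h
      · right
        by_contra hd
        push_neg at hd
        exact hc ⟨h, hd⟩
  rw [hset, measure_diff (by intro x hx; exact ⟨by linarith [hx.1], by linarith [hx.2]⟩)
    measurableSet_Ioo.nullMeasurableSet (by simp [Real.volume_Ioo]),
    Real.volume_Ico, Real.volume_Ioo, ← ENNReal.ofReal_sub _ (by linarith)]
  congr 1; ring

private lemma vol_sin₂ {t : ℝ} (h0 : π/2 ≤ t) (h1 : t ≤ π) :
    volume {φ ∈ Set.Ico 0 (2*π) | Real.sin φ ≤ Real.sin t} = ENNReal.ofReal (3*π - 2*t) := by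
  have hπ := Real.pi_pos
  have hset : {φ ∈ Set.Ico 0 (2*π) | Real.sin φ ≤ Real.sin t}
      = Set.Ico 0 (2*π) \ Set.Ioo (π - t) t := by
    ext φ
    simp only [Set.mem_sep_iff, Set.mem_Ico, Set.mem_diff, Set.mem_Ioo]
    constructor
    · rintro ⟨⟨ha, hb⟩, hc⟩
      refine ⟨⟨ha, hb⟩, ?_⟩
      rcases (sin_iff₂ h0 h1 ha hb).1 hc with h | h
      · rintro ⟨h4, h5⟩; linarith
      · rintro ⟨h4, h5⟩; linarith
    · rintro ⟨⟨ha, hb⟩, hc⟩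
      refine ⟨⟨ha, hb⟩, (sin_iff₂ h0 h1 ha hb).2 ?_⟩
      rcases le_or_gt φ (π - t) with h | h
      · exact Or.inl h
      · right
        by_contra hd
        push_neg at hd
        exact hc ⟨h, hd⟩
  rw [hset, measure_diff (by intro x hx; exact ⟨by linarith [hx.1], by linarith [hx.2]⟩)
    measurableSet_Ioo.nullMeasurableSet (by simp [Real.volume_Ioo]),
    Real.volume_Ico, Real.volume_Ioo, ← ENNReal.ofReal_sub _ (by linarith)]
  congr 1; ring

private lemma vol_sin₃ {t : ℝ} (h0 : π ≤ t) (h1 : t ≤ π + π/2) :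
    volume {φ ∈ Set.Ico 0 (2*π) | Real.sin φ ≤ Real.sin t} = ENNReal.ofReal (3*π - 2*t) := by
  have hπ := Real.pi_pos
  rw [show (3*π - 2*t : ℝ) = (3*π - t) - t by ring]
  apply volume_between (c := 0)
  · rintro φ ⟨hl, hr⟩
    exact ⟨⟨by linarith, by linarith⟩, sin_mem₃ h0 h1 hl.le hr.le⟩
  · rintro φ ⟨⟨ha, hb⟩, hc⟩
    rcases sin_sub₃ h0 h1 ha hb hc with h | ⟨h2, h3⟩
    · exact h ▸ Set.mem_insert _ _
    · exact Set.mem_insert_of_mem _ ⟨h2, h3⟩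

private lemma vol_sin₄ {t : ℝ} (h0 : π + π/2 ≤ t) (h1 : t ≤ 2*π) :
    volume {φ ∈ Set.Ico 0 (2*π) | Real.sin φ ≤ Real.sin t} = ENNReal.ofReal (2*t - 3*π) := by
  have hπ := Real.pi_pos
  rw [show (2*t - 3*π : ℝ) = t - (3*π - t) by ring]
  apply volume_between (c := 0)
  · rintro φ ⟨hl, hr⟩
    exact ⟨⟨by linarith, by linarith⟩, sin_mem₄ h0 h1 hl.le hr.le⟩
  · rintro φ ⟨⟨ha, hb⟩, hc⟩
    rcases sin_sub₄ h0 h1 ha hb hc with h | ⟨h2, h3⟩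
    · exact h ▸ Set.mem_insert _ _
    · exact Set.mem_insert_of_mem _ ⟨h2, h3⟩

private lemma vol_joint₁ {t : ℝ} (h0 : 0 ≤ t) (h1 : t ≤ π/2) :
    volume {φ ∈ Set.Ico 0 (2*π) | Real.cos φ ≤ Real.cos t ∧ Real.sin φ ≤ Real.sin t}
      = ENNReal.ofReal π := by
  have hπ := Real.pi_pos
  have hv := volume_between (S := {φ ∈ Set.Ico 0 (2*π) | Real.cos φ ≤ Real.cos t ∧ Real.sin φ ≤ Real.sin t})
    (a := π - t) (b := 2*π - t) (c := t) ?_ ?_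
  · rw [hv]; congr 1; ring
  · rintro φ ⟨hl, hr⟩
    refine ⟨⟨by linarith, by linarith⟩, ?_, ?_⟩
    · exact (cos_iff₁ h0 (by linarith) (by linarith) (by linarith)).2 ⟨by linarith, by linarith⟩
    · exact (sin_iff₁ h0 h1 (by linarith) (by linarith)).2 (Or.inr hl.le)
  · rintro φ ⟨⟨ha, hb⟩, hc, hd⟩
    obtain ⟨h2, h3⟩ := (cos_iff₁ h0 (by linarith) ha hb).1 hc
    rcases (sin_iff₁ h0 h1 ha hb).1 hd with h | h
    · exact (le_antisymm h h2) ▸ Set.mem_insert _ _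
    · exact Set.mem_insert_of_mem _ ⟨h, h3⟩

private lemma vol_joint₂ {t : ℝ} (h0 : π/2 ≤ t) (h1 : t ≤ π) :
    volume {φ ∈ Set.Ico 0 (2*π) | Real.cos φ ≤ Real.cos t ∧ Real.sin φ ≤ Real.sin t}
      = ENNReal.ofReal (2*π - 2*t) := by
  have hπ := Real.pi_pos
  rw [show (2*π - 2*t : ℝ) = (2*π - t) - t by ring]
  apply volume_between (c := t)
  · rintro φ ⟨hl, hr⟩
    refine ⟨⟨by linarith, by linarith⟩, ?_, ?_⟩
    · exact (cos_iff₁ (by linarith) h1 (by linarith) (by linarith)).2 ⟨hl.le, hr.le⟩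
    · exact (sin_iff₂ h0 h1 (by linarith) (by linarith)).2 (Or.inr hl.le)
  · rintro φ ⟨⟨ha, hb⟩, hc, hd⟩
    obtain ⟨h2, h3⟩ := (cos_iff₁ (by linarith) h1 ha hb).1 hc
    exact Set.mem_insert_of_mem _ ⟨h2, h3⟩

private lemma vol_joint₃ {t : ℝ} (h0 : π ≤ t) (h1 : t ≤ π + π/2) :
    volume {φ ∈ Set.Ico 0 (2*π) | Real.cos φ ≤ Real.cos t ∧ Real.sin φ ≤ Real.sin t}
      = 0 := by
  have hπ := Real.pi_pos
  have := volume_between (S := {φ ∈ Set.Ico 0 (2*π) | Real.cos φ ≤ Real.cos t ∧ Real.sin φ ≤ Real.sin t})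
    (a := t) (b := t) (c := t) (by simp) ?_
  · rw [this]; simp
  · rintro φ ⟨⟨ha, hb⟩, hc, hd⟩
    obtain ⟨h2, h3⟩ := (cos_iff₂ h0 (by linarith) ha hb).1 hc
    rcases sin_sub₃ h0 h1 ha hb hd with h | ⟨h4, h5⟩
    · exfalso; rw [h] at h2; linarith
    · exact Set.mem_insert_of_mem _ ⟨h4, h3⟩

private lemma vol_joint₄ {t : ℝ} (h0 : π + π/2 ≤ t) (h1 : t ≤ 2*π) :
    volume {φ ∈ Set.Ico 0 (2*π) | Real.cos φ ≤ Real.cos t ∧ Real.sin φ ≤ Real.sin t}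
      = ENNReal.ofReal (2*t - 3*π) := by
  have hπ := Real.pi_pos
  rw [show (2*t - 3*π : ℝ) = t - (3*π - t) by ring]
  apply volume_between (c := 0)
  · rintro φ ⟨hl, hr⟩
    refine ⟨⟨by linarith, by linarith⟩, ?_, ?_⟩
    · exact (cos_iff₂ (by linarith) h1 (by linarith) (by linarith)).2 ⟨by linarith, hr.le⟩
    · exact sin_mem₄ h0 h1 hl.le hr.le
  · rintro φ ⟨⟨ha, hb⟩, hc, hd⟩
    obtain ⟨h2, h3⟩ := (cos_iff₂ (by linarith) h1 ha hb).1 hc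
    rcases sin_sub₄ h0 h1 ha hb hd with h | ⟨h4, h5⟩
    · exact h ▸ Set.mem_insert _ _
    · exact Set.mem_insert_of_mem _ ⟨h4, h3⟩
/-- The uniform distribution on the unit circle: pushforward of the normalized
Lebesgue measure on `[0, 2π)` under `θ ↦ (cos θ, sin θ)`. -/
noncomputable def circleUniform : Measure (ℝ × ℝ) :=
  Measure.map (fun θ : ℝ => (Real.cos θ, Real.sin θ))
    ((ENNReal.ofReal (2 * Real.pi))⁻¹ • volume.restrict (Set.Ico 0 (2 * Real.pi)))

/-- Joint CDF of the circular uniform distribution. -/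
noncomputable def circF (x y : ℝ) : ℝ :=
  (circleUniform (Set.Iic x ×ˢ Set.Iic y)).toReal

/-- First marginal CDF. -/
noncomputable def circF₁ (x : ℝ) : ℝ := ((circleUniform.map Prod.fst) (Set.Iic x)).toReal

/-- Second marginal CDF. -/
noncomputable def circF₂ (y : ℝ) : ℝ := ((circleUniform.map Prod.snd) (Set.Iic y)).toReal

private lemma measurable_cs : Measurable (fun θ : ℝ => (Real.cos θ, Real.sin θ)) :=
  (Real.continuous_cos.prodMk Real.continuous_sin).measurable

private lemma circleUniform_apply {S : Set (ℝ × ℝ)} (hS : MeasurableSet S) :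
    circleUniform S = (ENNReal.ofReal (2*π))⁻¹
      * volume {φ ∈ Set.Ico 0 (2*π) | (Real.cos φ, Real.sin φ) ∈ S} := by
  rw [circleUniform, Measure.map_apply measurable_cs hS, Measure.smul_apply,
    Measure.restrict_apply (measurable_cs hS), smul_eq_mul]
  congr 2
  ext φ
  simp [Set.mem_preimage, and_comm]

private lemma toReal_helper' {r : ℝ} (hr : 0 ≤ r) :
    ((ENNReal.ofReal (2*π))⁻¹ * ENNReal.ofReal r).toReal = r / (2*π) := by
  rw [ENNReal.toReal_mul, ENNReal.toReal_inv, ENNReal.toReal_ofReal pi2_pos.le,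
    ENNReal.toReal_ofReal hr, inv_mul_eq_div]

private lemma circF_eq (x y : ℝ) : circF x y =
    (((ENNReal.ofReal (2*π))⁻¹
      * volume {φ ∈ Set.Ico 0 (2*π) | Real.cos φ ≤ x ∧ Real.sin φ ≤ y}).toReal) := by
  rw [circF, circleUniform_apply (measurableSet_Iic.prod measurableSet_Iic)]
  rfl

private lemma circF₁_eq (x : ℝ) : circF₁ x =
    (((ENNReal.ofReal (2*π))⁻¹
      * volume {φ ∈ Set.Ico 0 (2*π) | Real.cos φ ≤ x}).toReal) := by
  rw [circF₁, circleUniform, Measure.map_map measurable_fst measurable_cs,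
    show (Prod.fst ∘ fun θ : ℝ => (Real.cos θ, Real.sin θ)) = Real.cos from rfl,
    Measure.map_apply Real.measurable_cos measurableSet_Iic,
    Measure.smul_apply, Measure.restrict_apply (Real.measurable_cos measurableSet_Iic),
    smul_eq_mul]
  congr 3
  ext φ
  simp [Set.mem_preimage, and_comm]

private lemma circF₂_eq (y : ℝ) : circF₂ y =
    (((ENNReal.ofReal (2*π))⁻¹
      * volume {φ ∈ Set.Ico 0 (2*π) | Real.sin φ ≤ y}).toReal) := by
  rw [circF₂, circleUniform, Measure.map_map measurable_snd measurable_cs,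
    show (Prod.snd ∘ fun θ : ℝ => (Real.cos θ, Real.sin θ)) = Real.sin from rfl,
    Measure.map_apply Real.measurable_sin measurableSet_Iic,
    Measure.smul_apply, Measure.restrict_apply (Real.measurable_sin measurableSet_Iic),
    smul_eq_mul]
  congr 3
  ext φ
  simp [Set.mem_preimage, and_comm]
private lemma Gsq₁ {t : ℝ} (h0 : 0 ≤ t) (h1 : t ≤ π/2) :
    (circF (Real.cos t) (Real.sin t) - circF₁ (Real.cos t) * circF₂ (Real.sin t))^2
      = ((t - 0) * (t - π/2))^2 / π^4 := by
  have hπ := Real.pi_pos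
  have hF : circF (Real.cos t) (Real.sin t) = π/(2*π) := by
    rw [circF_eq, vol_joint₁ h0 h1, toReal_helper' (by linarith)]
  have hF₁ : circF₁ (Real.cos t) = (2*π - 2*t)/(2*π) := by
    rw [circF₁_eq, vol_cos₁ h0 (by linarith), toReal_helper' (by linarith)]
  have hF₂ : circF₂ (Real.sin t) = (π + 2*t)/(2*π) := by
    rw [circF₂_eq, vol_sin₁ h0 h1, toReal_helper' (by linarith)]
  rw [hF, hF₁, hF₂]
  field_simp
  ring

private lemma Gsq₂ {t : ℝ} (h0 : π/2 ≤ t) (h1 : t ≤ π) :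
    (circF (Real.cos t) (Real.sin t) - circF₁ (Real.cos t) * circF₂ (Real.sin t))^2
      = ((t - π/2) * (t - π))^2 / π^4 := by
  have hπ := Real.pi_pos
  have hF : circF (Real.cos t) (Real.sin t) = (2*π - 2*t)/(2*π) := by
    rw [circF_eq, vol_joint₂ h0 h1, toReal_helper' (by linarith)]
  have hF₁ : circF₁ (Real.cos t) = (2*π - 2*t)/(2*π) := by
    rw [circF₁_eq, vol_cos₁ (by linarith) h1, toReal_helper' (by linarith)]
  have hF₂ : circF₂ (Real.sin t) = (3*π - 2*t)/(2*π) := by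
    rw [circF₂_eq, vol_sin₂ h0 h1, toReal_helper' (by linarith)]
  rw [hF, hF₁, hF₂]
  field_simp
  ring

private lemma Gsq₃ {t : ℝ} (h0 : π ≤ t) (h1 : t ≤ π + π/2) :
    (circF (Real.cos t) (Real.sin t) - circF₁ (Real.cos t) * circF₂ (Real.sin t))^2
      = ((t - π) * (t - (π + π/2)))^2 / π^4 := by
  have hπ := Real.pi_pos
  have hF : circF (Real.cos t) (Real.sin t) = 0 := by
    rw [circF_eq, vol_joint₃ h0 h1]
    simp
  have hF₁ : circF₁ (Real.cos t) = (2*t - 2*π)/(2*π) := by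
    rw [circF₁_eq, vol_cos₂ h0 (by linarith), toReal_helper' (by linarith)]
  have hF₂ : circF₂ (Real.sin t) = (3*π - 2*t)/(2*π) := by
    rw [circF₂_eq, vol_sin₃ h0 h1, toReal_helper' (by linarith)]
  rw [hF, hF₁, hF₂]
  field_simp
  ring

private lemma Gsq₄ {t : ℝ} (h0 : π + π/2 ≤ t) (h1 : t ≤ 2*π) :
    (circF (Real.cos t) (Real.sin t) - circF₁ (Real.cos t) * circF₂ (Real.sin t))^2
      = ((t - (π + π/2)) * (t - 2*π))^2 / π^4 := by
  have hπ := Real.pi_pos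
  have hF : circF (Real.cos t) (Real.sin t) = (2*t - 3*π)/(2*π) := by
    rw [circF_eq, vol_joint₄ h0 h1, toReal_helper' (by linarith)]
  have hF₁ : circF₁ (Real.cos t) = (2*t - 2*π)/(2*π) := by
    rw [circF₁_eq, vol_cos₂ (by linarith) h1, toReal_helper' (by linarith)]
  have hF₂ : circF₂ (Real.sin t) = (2*t - 3*π)/(2*π) := by
    rw [circF₂_eq, vol_sin₄ h0 h1, toReal_helper' (by linarith)]
  rw [hF, hF₁, hF₂]
  field_simp
  ring
private lemma quartic_integral (a b : ℝ) :
    ∫ t in a..b, ((t - a) * (t - b))^2 = (b - a)^5 / 30 := by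
  have key : ∀ x ∈ Set.uIcc a b,
      HasDerivAt (fun t => (t - a)^5/5 - (b - a)*(t - a)^4/2 + (b - a)^2*(t - a)^3/3)
        (((x - a) * (x - b))^2) x := by
    intro x _
    have h1 : HasDerivAt (fun t : ℝ => t - a) 1 x := (hasDerivAt_id x).sub_const a
    have h5 := (h1.pow 5).div_const 5
    have h4 := ((h1.pow 4).const_mul (b - a)).div_const 2
    have h3 := ((h1.pow 3).const_mul ((b - a)^2)).div_const 3
    have := (h5.sub h4).add h3
    exact this.congr_deriv (by norm_num; ring)
  rw [intervalIntegral.integral_eq_sub_of_hasDerivAt key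
    (Continuous.intervalIntegrable (by fun_prop) a b)]
  ring

/-- Hoeffding's `D` correlation measure of the uniform distribution on
the unit circle equals `1/16`. -/
theorem hoeffdingD_circle :
    30 * ∫ p : ℝ × ℝ, (circF p.1 p.2 - circF₁ p.1 * circF₂ p.2) ^ 2 ∂circleUniform
      = 1 / 16 := by
  have hπ := Real.pi_pos
  set f : ℝ × ℝ → ℝ := fun p => (circF p.1 p.2 - circF₁ p.1 * circF₂ p.2) ^ 2 with hf
  set g' : ℝ → ℝ × ℝ :=
    (Set.Ico 0 (2*π)).piecewise (fun θ => (Real.cos θ, Real.sin θ)) (fun θ => (θ, 2)) with hg'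
  have hg'meas : Measurable g' :=
    Measurable.piecewise measurableSet_Ico measurable_cs
      (measurable_id.prodMk measurable_const)
  have hg'inj : Function.Injective g' := by
    intro x y hxy
    rcases Classical.em (x ∈ Set.Ico 0 (2*π)) with hx | hx <;>
      rcases Classical.em (y ∈ Set.Ico 0 (2*π)) with hy | hy
    · rw [hg'] at hxy
      simp only [Set.piecewise_eq_of_mem _ _ _ hx, Set.piecewise_eq_of_mem _ _ _ hy,
        Prod.mk.injEq] at hxy
      obtain ⟨hc, hs⟩ := hxy
      have h1 : Real.cos (x - y) = 1 := by
        rw [Real.cos_sub, hc, hs]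
        linear_combination Real.sin_sq_add_cos_sq y
      have h2 : x - y = 0 := by
        rw [Real.cos_eq_one_iff_of_lt_of_lt (by cases hx; cases hy; linarith)
          (by cases hx; cases hy; linarith)] at h1
        exact h1
      linarith
    · exfalso
      rw [hg'] at hxy
      simp only [Set.piecewise_eq_of_mem _ _ _ hx, Set.piecewise_eq_of_notMem _ _ _ hy,
        Prod.mk.injEq] at hxy
      have := Real.sin_le_one x
      linarith [hxy.2]
    · exfalso
      rw [hg'] at hxy
      simp only [Set.piecewise_eq_of_notMem _ _ _ hx, Set.piecewise_eq_of_mem _ _ _ hy,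
        Prod.mk.injEq] at hxy
      have := Real.sin_le_one y
      linarith [hxy.2]
    · rw [hg'] at hxy
      simp only [Set.piecewise_eq_of_notMem _ _ _ hx, Set.piecewise_eq_of_notMem _ _ _ hy,
        Prod.mk.injEq] at hxy
      exact hxy.1
  have hemb : MeasurableEmbedding g' := hg'meas.measurableEmbedding hg'inj
  -- the circle measure is the image of g'
  have hmapeq : circleUniform = Measure.map g'
      ((ENNReal.ofReal (2 * π))⁻¹ • volume.restrict (Set.Ico 0 (2 * π))) := by
    rw [circleUniform]
    apply Measure.map_congr
    refine Measure.ae_smul_measure ?_ _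
    filter_upwards [ae_restrict_mem measurableSet_Ico] with θ hθ
    rw [hg']
    exact (Set.piecewise_eq_of_mem _ (fun θ : ℝ => (Real.cos θ, Real.sin θ))
      (fun θ : ℝ => (θ, (2:ℝ))) hθ).symm
  -- reduce to an integral over [0, 2π)
  rw [hmapeq, hemb.integral_map, integral_smul_measure, ENNReal.toReal_inv,
    ENNReal.toReal_ofReal pi2_pos.le, smul_eq_mul]
  -- replace f ∘ g' by the circle values on the Ico
  have hcongr : ∫ θ in Set.Ico 0 (2*π), f (g' θ)
      = ∫ θ in Set.Ico 0 (2*π), f (Real.cos θ, Real.sin θ) := by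
    apply setIntegral_congr_fun measurableSet_Ico
    intro θ hθ
    rw [hg']
    simp only [Set.piecewise_eq_of_mem _ _ _ hθ]
  rw [hcongr]
  -- the explicit piecewise polynomial values
  set F : ℝ → ℝ := fun θ => f (Real.cos θ, Real.sin θ) with hF
  have e₁ : Set.EqOn F (fun t => ((t - 0) * (t - π/2))^2/π^4) (Set.Ico 0 (π/2)) := by
    intro t ht; exact Gsq₁ ht.1 ht.2.le
  have e₂ : Set.EqOn F (fun t => ((t - π/2) * (t - π))^2/π^4) (Set.Ico (π/2) π) := by
    intro t ht; exact Gsq₂ ht.1 ht.2.le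
  have e₃ : Set.EqOn F (fun t => ((t - π) * (t - (π + π/2)))^2/π^4) (Set.Ico π (π + π/2)) := by
    intro t ht; exact Gsq₃ ht.1 ht.2.le
  have e₄ : Set.EqOn F (fun t => ((t - (π + π/2)) * (t - 2*π))^2/π^4)
      (Set.Ico (π + π/2) (2*π)) := by
    intro t ht; exact Gsq₄ ht.1 ht.2.le
  have intG : ∀ (a b : ℝ) (G : ℝ → ℝ), Continuous G → IntegrableOn G (Set.Ico a b) :=
    fun a b G hG => (hG.continuousOn.integrableOn_Icc).mono_set Set.Ico_subset_Icc_self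
  have i₁ : IntegrableOn F (Set.Ico 0 (π/2)) :=
    ((intG _ _ _ (by fun_prop)).congr_fun e₁.symm measurableSet_Ico)
  have i₂ : IntegrableOn F (Set.Ico (π/2) π) :=
    ((intG _ _ _ (by fun_prop)).congr_fun e₂.symm measurableSet_Ico)
  have i₃ : IntegrableOn F (Set.Ico π (π + π/2)) :=
    ((intG _ _ _ (by fun_prop)).congr_fun e₃.symm measurableSet_Ico)
  have i₄ : IntegrableOn F (Set.Ico (π + π/2) (2*π)) :=
    ((intG _ _ _ (by fun_prop)).congr_fun e₄.symm measurableSet_Ico)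
  -- split the integral into four pieces
  have d : ∀ a b c : ℝ, Disjoint (Set.Ico a b) (Set.Ico b c) :=
    fun a b c => Set.disjoint_left.mpr (fun x hx hy => absurd hy.1 (not_le.mpr hx.2))
  have hs3 : Set.Ico (0:ℝ) π = Set.Ico 0 (π/2) ∪ Set.Ico (π/2) π :=
    (Set.Ico_union_Ico_eq_Ico (by linarith) (by linarith)).symm
  have hs2 : Set.Ico (0:ℝ) (π + π/2) = Set.Ico 0 π ∪ Set.Ico π (π + π/2) :=
    (Set.Ico_union_Ico_eq_Ico (by linarith) (by linarith)).symm
  have hs1 : Set.Ico (0:ℝ) (2*π) = Set.Ico 0 (π + π/2) ∪ Set.Ico (π + π/2) (2*π) :=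
    (Set.Ico_union_Ico_eq_Ico (by linarith) (by linarith)).symm
  have i₁₂ : IntegrableOn F (Set.Ico 0 π) := by rw [hs3]; exact i₁.union i₂
  have i₁₂₃ : IntegrableOn F (Set.Ico 0 (π + π/2)) := by rw [hs2]; exact i₁₂.union i₃
  have hsplit : ∫ θ in Set.Ico 0 (2*π), F θ
      = (∫ θ in Set.Ico 0 (π/2), F θ) + (∫ θ in Set.Ico (π/2) π, F θ)
        + (∫ θ in Set.Ico π (π + π/2), F θ) + (∫ θ in Set.Ico (π + π/2) (2*π), F θ) := by
    rw [hs1, setIntegral_union (d _ _ _) measurableSet_Ico i₁₂₃ i₄,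
      hs2, setIntegral_union (d _ _ _) measurableSet_Ico i₁₂ i₃,
      hs3, setIntegral_union (d _ _ _) measurableSet_Ico i₁ i₂]
  rw [hsplit]
  -- evaluate each piece
  have ico_eval : ∀ (a b : ℝ), a ≤ b → ∀ (G : ℝ → ℝ), Set.EqOn F G (Set.Ico a b) →
      ∫ θ in Set.Ico a b, F θ = ∫ t in a..b, G t := by
    intro a b hab G hG
    rw [setIntegral_congr_fun measurableSet_Ico hG, integral_Ico_eq_integral_Ioo,
      intervalIntegral.integral_of_le hab, integral_Ioc_eq_integral_Ioo]
  have q : ∀ a b : ℝ, (∫ t in a..b, ((t - a) * (t - b))^2/π^4) = (b - a)^5/30/π^4 := by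
    intro a b
    rw [intervalIntegral.integral_div, quartic_integral]
  rw [ico_eval 0 (π/2) (by linarith) _ e₁, ico_eval (π/2) π (by linarith) _ e₂,
    ico_eval π (π + π/2) (by linarith) _ e₃, ico_eval (π + π/2) (2*π) (by linarith) _ e₄,
    q 0 (π/2), q (π/2) π, q π (π + π/2), q (π + π/2) (2*π)]
  have hπ' : (π : ℝ) ≠ 0 := Real.pi_ne_zero
  field_simp
  ring
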